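/- Fix 0 < δ < 1 and let Ω_δ := { x + iy ∈ ℂ : x² + y²/δ² ≤ 1 } be the closed region enclosed by the ellipse with vertices ±1 and co-vertices ±iδ. If P is a complex polynomial of degree at most n such that |P(z)| ≤ 1 for all z ∈ Ω_δ, then |P(1+ε)| ≤ (1 + (3/(2δ))·ε)^n for all 0 < ε < 1. -/

import Mathlib

open Polynomial Finset

/-- Fix 0 < δ < 1 and let Ω_δ := { x + iy ∈ ℂ : x² + y²/δ² ≤ 1 } be the
closed region enclosed by the ellipse with vertices ±1 and co-vertices ±iδ. If P is a
complex polynomial of degree at most n such that |P(z)| ≤ 1 for all z ∈ Ω_δ, then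
|P(1+ε)| ≤ (1 + (3/(2δ))·ε)^n for all 0 < ε < 1. -/
theorem stmt_11
    (δ : ℝ) (hδ0 : 0 < δ) (hδ1 : δ < 1)
    (n : ℕ) (P : Polynomial ℂ) (hdeg : P.degree ≤ n)
    (hbound : ∀ z : ℂ, z.re ^ 2 + z.im ^ 2 / δ ^ 2 ≤ 1 → ‖P.eval z‖ ≤ 1)
    (ε : ℝ) (hε0 : 0 < ε) (hε1 : ε < 1) :
    ‖P.eval (1 + (ε : ℂ))‖ ≤ (1 + 3 / (2 * δ) * ε) ^ n := by
  have hnd : P.natDegree < n + 1 :=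
    Nat.lt_succ_of_le (Polynomial.natDegree_le_iff_degree_le.mpr hdeg)
  obtain ⟨a, ha⟩ : ∃ a : ℝ, a = (1 + δ) / 2 := ⟨_, rfl⟩
  obtain ⟨b, hb⟩ : ∃ b : ℝ, b = (1 - δ) / 2 := ⟨_, rfl⟩
  have hs0 : (0:ℝ) ≤ δ ^ 2 + 2 * ε + ε ^ 2 := by positivity
  obtain ⟨s, hssq, hs_nonneg⟩ : ∃ s : ℝ, s ^ 2 = δ ^ 2 + 2 * ε + ε ^ 2 ∧ 0 ≤ s :=
    ⟨Real.sqrt (δ ^ 2 + 2 * ε + ε ^ 2), Real.sq_sqrt hs0, Real.sqrt_nonneg _⟩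
  have h1δ : (0:ℝ) < 1 - δ := by linarith
  -- s ≥ δ + ε
  have hs_ge : δ + ε ≤ s := by nlinarith [hssq, hs_nonneg]
  -- s < 1 + ε
  have hs_lt : s < 1 + ε := by nlinarith [hssq, hs_nonneg]
  -- s ≤ δ + 3ε/(2δ)
  have hs_le : s ≤ δ + 3 * ε / (2 * δ) := by
    have h9 : (0:ℝ) ≤ 9 * ε ^ 2 / (4 * δ ^ 2) := by positivity
    have hexp : (δ + 3 * ε / (2 * δ)) ^ 2 = δ ^ 2 + 3 * ε + 9 * ε ^ 2 / (4 * δ ^ 2) := by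
      field_simp; ring
    have ht0 : (0:ℝ) ≤ δ + 3 * ε / (2 * δ) := by positivity
    calc s = Real.sqrt (s ^ 2) := (Real.sqrt_sq hs_nonneg).symm
    _ ≤ Real.sqrt ((δ + 3 * ε / (2 * δ)) ^ 2) := by
        apply Real.sqrt_le_sqrt; rw [hssq, hexp]; nlinarith
    _ = δ + 3 * ε / (2 * δ) := Real.sqrt_sq ht0
  obtain ⟨u₀, hu₀⟩ : ∃ u₀ : ℝ, u₀ = (1 + ε - s) / (1 - δ) := ⟨_, rfl⟩
  have hu0_pos : 0 < u₀ := by rw [hu₀]; apply div_pos <;> linarith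
  have hu0_le : u₀ ≤ 1 := by
    rw [hu₀, div_le_one h1δ]; linarith
  have hu0_ne : u₀ ≠ 0 := ne_of_gt hu0_pos
  -- the key algebraic identity: a/u₀ + b*u₀ = 1 + ε
  have hden : (1:ℝ) + ε - s ≠ 0 := by linarith
  have heq : a / u₀ + b * u₀ = 1 + ε := by
    rw [ha, hb, hu₀]
    field_simp
    nlinarith [hssq]
  -- 1/u₀ ≤ 1 + 3ε/(2δ)
  have hinv_eq : 1 / u₀ = (1 + ε + s) / (1 + δ) := by
    rw [hu₀, one_div_div, div_eq_div_iff hden (by linarith : (0:ℝ) < 1 + δ).ne']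
    linear_combination hssq
  have hinv_le : 1 / u₀ ≤ 1 + 3 / (2 * δ) * ε := by
    rw [hinv_eq, div_le_iff₀ (by linarith : (0:ℝ) < 1 + δ)]
    have hexp : (1 + 3 / (2 * δ) * ε) * (1 + δ) = 1 + δ + 3 * ε / (2 * δ) + 3 / 2 * ε := by
      field_simp; ring
    rw [hexp]
    linarith [hs_le]
  -- the auxiliary polynomial
  set H : Polynomial ℂ := ∑ k ∈ Finset.range (n + 1),
      Polynomial.C (P.coeff k) * (Polynomial.C (a:ℂ) + Polynomial.C (b:ℂ) * Polynomial.X ^ 2) ^ k *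
        Polynomial.X ^ (n - k) with hH
  -- evaluation identity
  have hHeval : ∀ u : ℂ, u ≠ 0 →
      H.eval u = u ^ n * P.eval ((a:ℂ) / u + (b:ℂ) * u) := by
    intro u hu
    rw [hH, Polynomial.eval_finset_sum, Polynomial.eval_eq_sum_range' hnd, mul_sum]
    refine Finset.sum_congr rfl fun k hk => ?_
    have hkn : k ≤ n := Nat.lt_succ_iff.mp (Finset.mem_range.mp hk)
    have hz : (a:ℂ) / u + (b:ℂ) * u = ((a:ℂ) + (b:ℂ) * u ^ 2) / u := by
      field_simp
    have hun : u ^ n = u ^ (n - k) * u ^ k := by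
      rw [← pow_add, Nat.sub_add_cancel hkn]
    simp only [Polynomial.eval_mul, Polynomial.eval_pow, Polynomial.eval_add,
      Polynomial.eval_C, Polynomial.eval_X, hz, div_pow, hun]
    field_simp
  -- boundary bound
  have hab : a + b = 1 := by rw [ha, hb]; ring
  have hba : b - a = -δ := by rw [ha, hb]; ring
  have hbdry : ∀ w ∈ frontier (Metric.ball (0:ℂ) 1), ‖Polynomial.eval w H‖ ≤ 1 := by
    intro w hw
    rw [frontier_ball (0:ℂ) one_ne_zero, Metric.mem_sphere, dist_zero_right] at hw
    have hw0 : w ≠ 0 := by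
      intro h; rw [h, norm_zero] at hw; exact one_ne_zero hw.symm
    have hwabs : ‖w‖ = 1 := hw
    have hnsq : Complex.normSq w = 1 := by
      rw [← Complex.sq_norm, hwabs, one_pow]
    have hinv : w⁻¹ = (starRingEnd ℂ) w := by
      rw [Complex.inv_def, hnsq]; simp
    set z : ℂ := (a:ℂ) / w + (b:ℂ) * w with hzdef
    have hzre : z.re = w.re := by
      rw [hzdef, div_eq_mul_inv, hinv]
      simp [Complex.add_re, Complex.mul_re, Complex.conj_re, Complex.conj_im,
        Complex.ofReal_re, Complex.ofReal_im]
      linear_combination w.re * hab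
    have hzim : z.im = -δ * w.im := by
      rw [hzdef, div_eq_mul_inv, hinv]
      simp [Complex.add_im, Complex.mul_im, Complex.conj_re, Complex.conj_im,
        Complex.ofReal_re, Complex.ofReal_im]
      linear_combination w.im * hba
    have hresq : w.re ^ 2 + w.im ^ 2 = 1 := by
      have h := hnsq
      rw [Complex.normSq_apply] at h
      linear_combination h
    have hzmem : z.re ^ 2 + z.im ^ 2 / δ ^ 2 ≤ 1 := by
      rw [hzre, hzim]
      have : (-δ * w.im) ^ 2 / δ ^ 2 = w.im ^ 2 := by
        field_simp
      rw [this]; linarith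
    have hPz := hbound z hzmem
    rw [hHeval w hw0]
    rw [norm_mul, norm_pow, hw, one_pow, one_mul]
    rw [← hzdef]
    exact hPz
  -- max modulus
  have hmax : ‖Polynomial.eval ((u₀:ℂ)) H‖ ≤ 1 := by
    apply Complex.norm_le_of_forall_mem_frontier_norm_le
      Metric.isBounded_ball (H.differentiable.diffContOnCl) hbdry
    rw [closure_ball (0:ℂ) one_ne_zero, Metric.mem_closedBall, dist_zero_right]
    rw [Complex.norm_real, Real.norm_eq_abs, abs_of_pos hu0_pos]
    exact hu0_le
  -- conclude
  have hat : (a:ℂ) / (u₀:ℂ) + (b:ℂ) * (u₀:ℂ) = 1 + (ε:ℂ) := by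
    have := congrArg (Complex.ofReal) heq
    push_cast at this
    exact this
  have hu0C : (u₀:ℂ) ≠ 0 := by exact_mod_cast hu0_ne
  rw [hHeval _ hu0C, hat] at hmax
  rw [norm_mul, norm_pow, Complex.norm_real, Real.norm_eq_abs, abs_of_pos hu0_pos] at hmax
  have hP1 : ‖P.eval (1 + (ε : ℂ))‖ ≤ (1 / u₀) ^ n := by
    rw [div_pow, one_pow]
    rw [le_div_iff₀ (by positivity)]
    linarith [hmax]
  calc ‖P.eval (1 + (ε : ℂ))‖ ≤ (1 / u₀) ^ n := hP1
  _ ≤ (1 + 3 / (2 * δ) * ε) ^ n := by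
    apply pow_le_pow_left₀ (by positivity) hinv_le
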